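/- Let u₁, u₂ be convex functions finite on ℝⁿ with u := max{u₁, u₂}, such that ∂u₁(ℝⁿ) ⊂ ch(Ω̄₁) and ∂u₂(ℝⁿ) ⊂ ch(Ω̄₂) where Ω̄₁ and Ω̄₂ are compact and strongly separated by a hyperplane. Then the three sets Σ := {x : ∂u(x) ∩ Ω̄₁ ≠ ∅ and ∂u(x) ∩ Ω̄₂ ≠ ∅}, C₁ := {x : ∂u(x) ∩ Ω̄₂ = ∅}, and C₂ := {x : ∂u(x) ∩ Ω̄₁ = ∅} coincide respectively with the sets {u₁ = u₂}, {u₁ > u₂}, and {u₁ < u₂}. -/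

import Mathlib

open Set RealInnerProductSpace

noncomputable section

/-- The subdifferential of `f : ℝⁿ → ℝ` at `x`. -/
def subdiff {n : ℕ} (f : EuclideanSpace ℝ (Fin n) → ℝ) (x : EuclideanSpace ℝ (Fin n)) :
    Set (EuclideanSpace ℝ (Fin n)) :=
  {p | ∀ y, f x + inner ℝ p (y - x) ≤ f y}

open MeasureTheory

variable {n : ℕ}

/-- Gradient of a convex function at a point of differentiability is a subgradient. -/
lemma grad_mem_subdiff {f : EuclideanSpace ℝ (Fin n) → ℝ} (hf : ConvexOn ℝ univ f)
    {x : EuclideanSpace ℝ (Fin n)} (h : DifferentiableAt ℝ f x) :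
    gradient f x ∈ subdiff f x := by
  intro y
  -- the 1D restriction g t = f (t • (y - x) + x)
  have hgconv : ConvexOn ℝ univ (fun t : ℝ => f (t • (y - x) + x)) := by
    have h1 := hf.comp_affineMap (AffineMap.lineMap x y)
    have he : (AffineMap.lineMap x y : ℝ →ᵃ[ℝ] EuclideanSpace ℝ (Fin n)) ⁻¹' univ = univ := by
      simp
    rw [he] at h1
    have h2 : (f ∘ ⇑(AffineMap.lineMap x y : ℝ →ᵃ[ℝ] EuclideanSpace ℝ (Fin n)))
        = fun t : ℝ => f (t • (y - x) + x) := by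
      funext t; simp [AffineMap.lineMap_apply_module]; congr 1; module
    rwa [h2] at h1
  have hline : HasDerivAt (fun t : ℝ => t • (y - x) + x) (y - x) (0 : ℝ) := by
    simpa using ((hasDerivAt_id (0:ℝ)).smul_const (y - x)).add_const x
  have hF : HasFDerivAt f (InnerProductSpace.toDual ℝ _ (gradient f x)) x :=
    h.hasGradientAt.hasFDerivAt
  have hF' : HasFDerivAt f (InnerProductSpace.toDual ℝ _ (gradient f x))
      ((0:ℝ) • (y - x) + x) := by simpa using hF
  have hg : HasDerivAt (fun t : ℝ => f (t • (y - x) + x)) ⟪gradient f x, y - x⟫ (0 : ℝ) := by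
    have := hF'.comp_hasDerivAt (0:ℝ) hline
    rw [show ⟪gradient f x, y - x⟫ = (InnerProductSpace.toDual ℝ _ (gradient f x)) (y - x) by
      rw [InnerProductSpace.toDual_apply_apply]]
    exact this
  have hslope := hgconv.le_slope_of_hasDerivAt (mem_univ (0:ℝ)) (mem_univ (1:ℝ)) zero_lt_one hg
  rw [slope_def_field] at hslope
  simp only [one_smul, zero_smul, zero_add, sub_add_cancel, sub_zero, div_one] at hslope
  linarith [hslope]

/-- Near any point there is a point of differentiability of a locally Lipschitz function. -/
lemma exists_differentiableAt_near {f : EuclideanSpace ℝ (Fin n) → ℝ}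
    (hf : LocallyLipschitz f) (x : EuclideanSpace ℝ (Fin n)) {ε : ℝ} (hε : 0 < ε) :
    ∃ y, dist y x < ε ∧ DifferentiableAt ℝ f y := by
  obtain ⟨K, t, ht, hK⟩ := hf x
  obtain ⟨r, hr, hrt⟩ := Metric.mem_nhds_iff.1 ht
  set r' : ℝ := min r ε with hr'def
  have hr' : 0 < r' := lt_min hr hε
  have hK' : LipschitzOnWith K f (Metric.ball x r') :=
    hK.mono ((Metric.ball_subset_ball (min_le_left r ε)).trans hrt)
  have hae := hK'.ae_differentiableWithinAt_of_mem (μ := volume)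
  have hpos : 0 < volume (Metric.ball x r') := Metric.measure_ball_pos volume x hr'
  by_contra hcon
  push_neg at hcon
  have hsub : Metric.ball x r' ⊆
      {y | ¬ (y ∈ Metric.ball x r' → DifferentiableWithinAt ℝ f (Metric.ball x r') y)} := by
    intro y hy
    simp only [mem_setOf_eq]
    intro hcontra
    have hd : DifferentiableAt ℝ f y :=
      (hcontra hy).differentiableAt (Metric.isOpen_ball.mem_nhds hy)
    exact hcon y (lt_of_lt_of_le (Metric.mem_ball.1 hy) (min_le_right r ε)) hd
  have := measure_mono (μ := volume) hsub
  rw [MeasureTheory.ae_iff.1 hae] at this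
  exact absurd (le_antisymm this zero_le) (ne_of_gt hpos)

/-- The subdifferential of a convex function meets the compact set containing all its gradients. -/
lemma subdiff_inter_nonempty {f : EuclideanSpace ℝ (Fin n) → ℝ} (hf : ConvexOn ℝ univ f)
    {Ω : Set (EuclideanSpace ℝ (Fin n))} (hΩ : IsCompact Ω)
    (hgrad : ∀ x, DifferentiableAt ℝ f x → gradient f x ∈ Ω)
    (x : EuclideanSpace ℝ (Fin n)) : (subdiff f x ∩ Ω).Nonempty := by
  have hL : LocallyLipschitz f := hf.locallyLipschitz
  have hc : Continuous f := hL.continuous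
  have hseq : ∀ k : ℕ, ∃ y, dist y x < 1 / (k + 1) ∧ DifferentiableAt ℝ f y := fun k =>
    exists_differentiableAt_near hL x (by positivity)
  choose y hy hdiff using hseq
  have hmemΩ : ∀ k, gradient f (y k) ∈ Ω := fun k => hgrad _ (hdiff k)
  obtain ⟨p, hpΩ, φ, hφ, hconv⟩ := hΩ.tendsto_subseq hmemΩ
  have hyx : Filter.Tendsto (fun k => y (φ k)) Filter.atTop (nhds x) := by
    rw [tendsto_iff_dist_tendsto_zero]
    refine squeeze_zero (fun k => dist_nonneg) (fun k => ?_)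
      tendsto_one_div_add_atTop_nhds_zero_nat
    calc dist (y (φ k)) x ≤ 1 / (φ k + 1) := (hy (φ k)).le
      _ ≤ 1 / (k + 1) := by
          apply one_div_le_one_div_of_le (by positivity)
          exact_mod_cast Nat.succ_le_succ (hφ.le_apply)
  refine ⟨p, ?_, hpΩ⟩
  intro z
  have hk : ∀ k, f (y (φ k)) + ⟪gradient f (y (φ k)), z - y (φ k)⟫ ≤ f z := fun k =>
    grad_mem_subdiff hf (hdiff (φ k)) z
  have hlim : Filter.Tendsto
      (fun k => f (y (φ k)) + ⟪gradient f (y (φ k)), z - y (φ k)⟫)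
      Filter.atTop (nhds (f x + ⟪p, z - x⟫)) := by
    exact ((hc.tendsto x).comp hyx).add (hconv.inner (tendsto_const_nhds.sub hyx))
  exact le_of_tendsto hlim (Filter.Eventually.of_forall hk)

/-- A local subgradient of a convex function is a global subgradient: if `f = f₁` on a ball
around `x` and `p` is a subgradient of `f` at `x`, then it is a subgradient of `f₁` at `x`. -/
lemma subdiff_localize {f f₁ : EuclideanSpace ℝ (Fin n) → ℝ} (hf₁ : ConvexOn ℝ univ f₁)
    {x : EuclideanSpace ℝ (Fin n)} {ε : ℝ} (hε : 0 < ε)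
    (heq : ∀ z ∈ Metric.ball x ε, f z = f₁ z) {p : EuclideanSpace ℝ (Fin n)}
    (hp : p ∈ subdiff f x) : p ∈ subdiff f₁ x := by
  intro y
  set N : ℝ := ‖y - x‖ with hN
  have hN0 : 0 ≤ N := norm_nonneg _
  set t : ℝ := min 1 (ε / (2 * (N + 1))) with htdef
  have ht0 : 0 < t := lt_min one_pos (by positivity)
  have ht1 : t ≤ 1 := min_le_left _ _
  set z : EuclideanSpace ℝ (Fin n) := t • (y - x) + x with hzdef
  have hzball : z ∈ Metric.ball x ε := by
    have : dist z x = t * N := by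
      rw [dist_eq_norm]
      simp only [hzdef, add_sub_cancel_right, norm_smul, Real.norm_eq_abs,
        abs_of_pos ht0, hN]
    rw [Metric.mem_ball, this]
    have h1 : t ≤ ε / (2 * (N + 1)) := min_le_right _ _
    have h2 : t * N ≤ ε / (2 * (N + 1)) * N :=
      mul_le_mul_of_nonneg_right h1 hN0
    have h3 : ε / (2 * (N + 1)) * N < ε := by
      rw [div_mul_eq_mul_div, div_lt_iff₀ (by positivity)]
      nlinarith
    linarith
  have hxball : x ∈ Metric.ball x ε := Metric.mem_ball_self hε
  have h1 := hp z
  rw [heq x hxball, heq z hzball] at h1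
  have hinner : (inner ℝ p (z - x) : ℝ) = t * inner ℝ p (y - x) := by
    rw [hzdef, add_sub_cancel_right, real_inner_smul_right]
  have hcvx : f₁ z ≤ (1 - t) * f₁ x + t * f₁ y := by
    have := hf₁.2 (mem_univ x) (mem_univ y) (by linarith : (0:ℝ) ≤ 1 - t) ht0.le (by ring)
    have hz : (1 - t) • x + t • y = z := by rw [hzdef]; module
    rwa [hz] at this
  rw [hinner] at h1
  have key : t * inner ℝ p (y - x) ≤ t * (f₁ y - f₁ x) := by nlinarith
  have := (mul_le_mul_iff_right₀ ht0).1 key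
  linarith

/-- For `u = max{u₁, u₂}` with subdifferential images in the convex hulls of compact sets
`Ω̄₁, Ω̄₂` strongly separated by a hyperplane, the tear set `Σ = {∂u meets both Ω̄ᵢ}`, and
the sets `C₁ = {∂u ∩ Ω̄₂ = ∅}` and `C₂ = {∂u ∩ Ω̄₁ = ∅}`, coincide with `{u₁ = u₂}`,
`{u₁ > u₂}` and `{u₁ < u₂}` respectively. -/
theorem tear_set_characterization (n : ℕ)
    (u₁ u₂ : EuclideanSpace ℝ (Fin n) → ℝ)
    (hu₁ : ConvexOn ℝ univ u₁) (hu₂ : ConvexOn ℝ univ u₂)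
    (u : EuclideanSpace ℝ (Fin n) → ℝ) (hu : u = fun x => max (u₁ x) (u₂ x))
    (Ω₁ Ω₂ : Set (EuclideanSpace ℝ (Fin n)))
    (hΩ₁ : IsCompact Ω₁) (hΩ₂ : IsCompact Ω₂)
    (hsub₁ : ∀ x, subdiff u₁ x ⊆ convexHull ℝ Ω₁)
    (hsub₂ : ∀ x, subdiff u₂ x ⊆ convexHull ℝ Ω₂)
    (hgrad₁ : ∀ x, DifferentiableAt ℝ u₁ x → gradient u₁ x ∈ Ω₁)
    (hgrad₂ : ∀ x, DifferentiableAt ℝ u₂ x → gradient u₂ x ∈ Ω₂)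
    (v : EuclideanSpace ℝ (Fin n)) (hv : ‖v‖ = 1) (a d : ℝ) (hd : 0 < d)
    (hsep₁ : ∀ p ∈ convexHull ℝ Ω₁, ⟪p, v⟫ < a - d)
    (hsep₂ : ∀ p ∈ convexHull ℝ Ω₂, a + d < ⟪p, v⟫) :
    {x | (subdiff u x ∩ Ω₁).Nonempty ∧ (subdiff u x ∩ Ω₂).Nonempty} = {x | u₁ x = u₂ x} ∧
    {x | subdiff u x ∩ Ω₂ = ∅} = {x | u₂ x < u₁ x} ∧
    {x | subdiff u x ∩ Ω₁ = ∅} = {x | u₁ x < u₂ x} := by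
  -- disjointness of the hulls from the opposite sets
  have d₁ : ∀ p, p ∈ convexHull ℝ Ω₁ → p ∉ Ω₂ := fun p h1 h2 =>
    absurd (hsep₂ p (subset_convexHull ℝ Ω₂ h2)) (by linarith [hsep₁ p h1])
  have d₂ : ∀ p, p ∈ convexHull ℝ Ω₂ → p ∉ Ω₁ := fun p h1 h2 =>
    absurd (hsep₁ p (subset_convexHull ℝ Ω₁ h2)) (by linarith [hsep₂ p h1])
  -- monotonicity of subdifferentials into the max
  have key₁ : ∀ x, u₂ x ≤ u₁ x → subdiff u₁ x ⊆ subdiff u x := by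
    intro x hx p hp y
    have h1 := hp y
    have hux : u x = u₁ x := by rw [hu]; exact max_eq_left hx
    have huy : u₁ y ≤ u y := by rw [hu]; exact le_max_left _ _
    rw [hux]; linarith
  have key₂ : ∀ x, u₁ x ≤ u₂ x → subdiff u₂ x ⊆ subdiff u x := by
    intro x hx p hp y
    have h1 := hp y
    have hux : u x = u₂ x := by rw [hu]; exact max_eq_right hx
    have huy : u₂ y ≤ u y := by rw [hu]; exact le_max_right _ _
    rw [hux]; linarith
  have ne₁ : ∀ x, (subdiff u₁ x ∩ Ω₁).Nonempty := subdiff_inter_nonempty hu₁ hΩ₁ hgrad₁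
  have ne₂ : ∀ x, (subdiff u₂ x ∩ Ω₂).Nonempty := subdiff_inter_nonempty hu₂ hΩ₂ hgrad₂
  have c₁ : Continuous u₁ := hu₁.locallyLipschitz.continuous
  have c₂ : Continuous u₂ := hu₂.locallyLipschitz.continuous
  -- when u₁ > u₂, the subdifferential of u is contained in the hull of Ω₁
  have loc₁ : ∀ x, u₂ x < u₁ x → subdiff u x ⊆ convexHull ℝ Ω₁ := by
    intro x hx p hp
    have hopen : IsOpen {z | u₂ z < u₁ z} := isOpen_lt c₂ c₁
    obtain ⟨ε, hε, hball⟩ := Metric.isOpen_iff.1 hopen x hx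
    have heq : ∀ z ∈ Metric.ball x ε, u z = u₁ z := fun z hz => by
      rw [hu]; exact max_eq_left (hball hz).le
    exact hsub₁ x (subdiff_localize hu₁ hε heq hp)
  have loc₂ : ∀ x, u₁ x < u₂ x → subdiff u x ⊆ convexHull ℝ Ω₂ := by
    intro x hx p hp
    have hopen : IsOpen {z | u₁ z < u₂ z} := isOpen_lt c₁ c₂
    obtain ⟨ε, hε, hball⟩ := Metric.isOpen_iff.1 hopen x hx
    have heq : ∀ z ∈ Metric.ball x ε, u z = u₂ z := fun z hz => by
      rw [hu]; exact max_eq_right (hball hz).le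
    exact hsub₂ x (subdiff_localize hu₂ hε heq hp)
  -- case facts
  have caseEq : ∀ x, u₁ x = u₂ x →
      (subdiff u x ∩ Ω₁).Nonempty ∧ (subdiff u x ∩ Ω₂).Nonempty := by
    intro x hx
    obtain ⟨p, hp, hpΩ⟩ := ne₁ x
    obtain ⟨q, hq, hqΩ⟩ := ne₂ x
    exact ⟨⟨p, key₁ x hx.ge hp, hpΩ⟩, ⟨q, key₂ x hx.le hq, hqΩ⟩⟩
  have caseGt : ∀ x, u₂ x < u₁ x →
      (subdiff u x ∩ Ω₁).Nonempty ∧ subdiff u x ∩ Ω₂ = ∅ := by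
    intro x hx
    obtain ⟨p, hp, hpΩ⟩ := ne₁ x
    refine ⟨⟨p, key₁ x hx.le hp, hpΩ⟩, eq_empty_iff_forall_notMem.2 ?_⟩
    rintro q ⟨hq, hqΩ⟩
    exact d₁ q (loc₁ x hx hq) hqΩ
  have caseLt : ∀ x, u₁ x < u₂ x →
      (subdiff u x ∩ Ω₂).Nonempty ∧ subdiff u x ∩ Ω₁ = ∅ := by
    intro x hx
    obtain ⟨q, hq, hqΩ⟩ := ne₂ x
    refine ⟨⟨q, key₂ x hx.le hq, hqΩ⟩, eq_empty_iff_forall_notMem.2 ?_⟩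
    rintro p ⟨hp, hpΩ⟩
    exact d₂ p (loc₂ x hx hp) hpΩ
  refine ⟨?_, ?_, ?_⟩
  · ext x
    simp only [mem_setOf_eq]
    constructor
    · rintro ⟨h1, h2⟩
      rcases lt_trichotomy (u₁ x) (u₂ x) with h | h | h
      · exact absurd h1 (by rw [(caseLt x h).2]; simp [Set.not_nonempty_empty])
      · exact h
      · exact absurd h2 (by rw [(caseGt x h).2]; simp [Set.not_nonempty_empty])
    · exact caseEq x
  · ext x
    simp only [mem_setOf_eq]
    constructor
    · intro h
      rcases lt_trichotomy (u₁ x) (u₂ x) with h' | h' | h'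
      · obtain ⟨hne, _⟩ := caseLt x h'
        rw [h] at hne; exact absurd hne (by simp [Set.not_nonempty_empty])
      · obtain ⟨_, hne⟩ := caseEq x h'
        rw [h] at hne; exact absurd hne (by simp [Set.not_nonempty_empty])
      · exact h'
    · exact fun h => (caseGt x h).2
  · ext x
    simp only [mem_setOf_eq]
    constructor
    · intro h
      rcases lt_trichotomy (u₁ x) (u₂ x) with h' | h' | h'
      · exact h'
      · obtain ⟨hne, _⟩ := caseEq x h'
        rw [h] at hne; exact absurd hne (by simp [Set.not_nonempty_empty])
      · obtain ⟨hne, _⟩ := caseGt x h'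
        rw [h] at hne; exact absurd hne (by simp [Set.not_nonempty_empty])
    · exact fun h => (caseLt x h).2
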